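/- Let X be a metric space, p ∈ X, and g an isometric equivalence of X. Then dist(g(p), p) ≤ d₀^p(g, id_X) ≤ dist(g(p), p) + 2√2. -/

import Mathlib

/-- The distance `d₀^p(h₁, h₂) = inf_{r>0} (1/r + sup_{x ∈ B_r(p)} dist (h₁ x) (h₂ x))`
on the group of isometric equivalences of a metric space `X`. -/
noncomputable def d0 {X : Type*} [MetricSpace X] (p : X) (h₁ h₂ : X ≃ᵢ X) : ℝ :=
  ⨅ r : Set.Ioi (0 : ℝ),
    (1 / (r : ℝ) + ⨆ x : Metric.ball p (r : ℝ), dist (h₁ x.1) (h₂ x.1))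

lemma dist_bound {X : Type*} [MetricSpace X] (p : X) (g : X ≃ᵢ X) {r : ℝ}
    (x : X) (hx : x ∈ Metric.ball p r) :
    dist (g x) x ≤ dist (g p) p + 2 * r := by
  have h1 : dist (g x) (g p) = dist x p := g.isometry.dist_eq x p
  have h2 : dist x p < r := Metric.mem_ball.mp hx
  calc dist (g x) x ≤ dist (g x) (g p) + dist (g p) p + dist p x :=
        dist_triangle4 _ _ _ _
    _ = dist x p + dist (g p) p + dist x p := by rw [h1, dist_comm p x]
    _ ≤ dist (g p) p + 2 * r := by nlinarith

/-- **Inequality (norm-dist).**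
For an isometric equivalence `g` of a metric space `X` and `p ∈ X`,
`dist (g p) p ≤ d₀^p(g, id) ≤ dist (g p) p + 2√2`. -/
theorem norm_dist (X : Type*) [MetricSpace X] (p : X) (g : X ≃ᵢ X) :
    dist (g p) p ≤ d0 p g (IsometryEquiv.refl X) ∧
      d0 p g (IsometryEquiv.refl X) ≤ dist (g p) p + 2 * Real.sqrt 2 := by
  constructor
  · apply le_ciInf
    rintro ⟨r, hr⟩
    have hr' : (0:ℝ) < r := hr
    have hmem : p ∈ Metric.ball p r := Metric.mem_ball_self hr'
    have hb : BddAbove (Set.range fun x : Metric.ball p r =>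
        dist (g x.1) ((IsometryEquiv.refl X) x.1)) := by
      refine ⟨dist (g p) p + 2 * r, ?_⟩
      rintro v ⟨⟨x, hx⟩, rfl⟩
      exact dist_bound p g x hx
    have hsup : dist (g p) p ≤ ⨆ x : Metric.ball p r,
        dist (g x.1) ((IsometryEquiv.refl X) x.1) := by
      have := le_ciSup hb (⟨p, hmem⟩ : Metric.ball p r)
      exact this
    have : (0:ℝ) ≤ 1 / r := by positivity
    simp only []
    linarith
  · have hs : (0:ℝ) < Real.sqrt 2 := by positivity
    set r : ℝ := (Real.sqrt 2)⁻¹ with hrdef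
    have hr : (0:ℝ) < r := by positivity
    have hbdd : BddBelow (Set.range fun r : Set.Ioi (0:ℝ) =>
        (1 / (r : ℝ) + ⨆ x : Metric.ball p (r : ℝ),
          dist (g x.1) ((IsometryEquiv.refl X) x.1))) := by
      refine ⟨0, ?_⟩
      rintro v ⟨⟨s, hs0⟩, rfl⟩
      have hs0' : (0:ℝ) < s := hs0
      have h1 : (0:ℝ) ≤ 1 / s := by positivity
      have h2 : (0:ℝ) ≤ ⨆ x : Metric.ball p s,
          dist (g x.1) ((IsometryEquiv.refl X) x.1) :=
        Real.iSup_nonneg fun x => dist_nonneg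
      simpa using add_nonneg h1 h2
    have key := ciInf_le hbdd (⟨r, hr⟩ : Set.Ioi (0:ℝ))
    have hmem : p ∈ Metric.ball p r := Metric.mem_ball_self hr
    haveI : Nonempty (Metric.ball p r) := ⟨⟨p, hmem⟩⟩
    have hsup : (⨆ x : Metric.ball p r,
        dist (g x.1) ((IsometryEquiv.refl X) x.1)) ≤ dist (g p) p + 2 * r := by
      apply ciSup_le
      rintro ⟨x, hx⟩
      exact dist_bound p g x hx
    have h2 : 2 * Real.sqrt 2 = 1 / r + 2 * r := by
      rw [hrdef]
      rw [one_div, inv_inv]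
      have : Real.sqrt 2 * Real.sqrt 2 = 2 := Real.mul_self_sqrt (by norm_num)
      field_simp
      nlinarith
    calc d0 p g (IsometryEquiv.refl X) ≤ 1 / r + ⨆ x : Metric.ball p r,
          dist (g x.1) ((IsometryEquiv.refl X) x.1) := key
      _ ≤ 1 / r + (dist (g p) p + 2 * r) := by linarith
      _ = dist (g p) p + 2 * Real.sqrt 2 := by rw [h2]; ring
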